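/- For all n ≥ 1 and all k with 1 ≤ k ≤ n − 1, the unsigned Stirling numbers of the first kind satisfy the normalized matching inequality s(n, k−1) · (s(n, k) + n·s(n, k+1)) ≤ s(n, k) · (s(n, k−1) + n·s(n, k)); equivalently, s(n,k−1)/(s(n,k−1) + n·s(n,k)) ≤ s(n,k)/(s(n,k) + n·s(n,k+1)) whenever the denominators are positive. -/

import Mathlib

/-- The number of cycles of a permutation of `{1,…,n}` (here `Fin n`),
counting fixed points as cycles of length one. -/
def cycleCount {n : ℕ} (π : Equiv.Perm (Fin n)) : ℕ :=
  π.cycleType.card + (Finset.univ.filter fun x => π x = x).card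

/-- The unsigned Stirling number of the first kind `s(n,k)`: the number of
permutations of an `n`-element set with exactly `k` cycles (fixed points
counting as cycles of length one). -/
def stirlingFirst (n k : ℕ) : ℕ :=
  (Finset.univ.filter fun π : Equiv.Perm (Fin n) => cycleCount π = k).card


section Aux

open Equiv Equiv.Perm Finset

variable {α : Type*} [Fintype α] [DecidableEq α]

/-- auxiliary cycle count -/
def ccAux (σ : Equiv.Perm α) : ℕ :=
  Multiset.card σ.cycleType + (Fintype.card α - σ.support.card)

lemma fixed_card_eq (σ : Equiv.Perm α) :
    (Finset.univ.filter fun x => σ x = x).card = Fintype.card α - σ.support.card := by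
  have h := Finset.card_filter_add_card_filter_not
    (s := (Finset.univ : Finset α)) (p := fun x => σ x = x)
  have hs : (Finset.univ.filter fun x => ¬ σ x = x) = σ.support := rfl
  rw [hs] at h
  simp only [Finset.card_univ] at h
  omega

lemma card_cycleType_eq (σ : Equiv.Perm α) :
    Multiset.card σ.cycleType = σ.cycleFactorsFinset.card := by
  simp [cycleType_def]

/-- Key lemma: multiplying a permutation fixing `a` by `swap a b` reduces the
cycle count by one. -/
lemma ccAux_swap_mul (σ : Equiv.Perm α) {a b : α} (hab : b ≠ a) (ha : σ a = a) :
    ccAux (Equiv.swap a b * σ) + 1 = ccAux σ := by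
  have hanotin : a ∉ σ.support := notMem_support.mpr ha
  by_cases hσb : σ b = b
  · -- disjoint case : new 2-cycle
    have hbnotin : b ∉ σ.support := notMem_support.mpr hσb
    have hd : Equiv.Perm.Disjoint (Equiv.swap a b) σ := by
      intro x
      by_cases hx : x = a
      · exact Or.inr (hx ▸ ha)
      by_cases hx' : x = b
      · exact Or.inr (hx' ▸ hσb)
      · exact Or.inl (swap_apply_of_ne_of_ne hx hx')
    have hct : (Equiv.swap a b * σ).cycleType = (Equiv.swap a b).cycleType + σ.cycleType :=
      hd.cycleType_mul
    have hctsw : Multiset.card (Equiv.swap a b).cycleType = 1 := by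
      rw [(isCycle_swap hab.symm).cycleType]; simp
    have hsupp : (Equiv.swap a b * σ).support = ({a, b} : Finset α) ∪ σ.support := by
      rw [hd.support_mul, support_swap hab.symm]
    have hdisj : _root_.Disjoint ({a, b} : Finset α) σ.support := by
      simp only [Finset.disjoint_left, Finset.mem_insert, Finset.mem_singleton]
      rintro x (rfl | rfl) <;> assumption
    have hcard : (Equiv.swap a b * σ).support.card = 2 + σ.support.card := by
      rw [hsupp, Finset.card_union_of_disjoint hdisj, Finset.card_pair hab.symm]
    have hbound : 2 + σ.support.card ≤ Fintype.card α := by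
      rw [← hcard]; exact Finset.card_le_univ _
    simp only [ccAux, hct, hcard, Multiset.card_add, hctsw]
    omega
  · -- merge case
    have hb' : b ∈ σ.support := mem_support.mpr hσb
    set c := σ.cycleOf b with hc_def
    have hcmem : c ∈ σ.cycleFactorsFinset := cycleOf_mem_cycleFactorsFinset_iff.mpr hb'
    have hcyc : c.IsCycle := isCycle_cycleOf σ hσb
    set d := σ * c⁻¹ with hd_def
    have hdc : Equiv.Perm.Disjoint d c := disjoint_mul_inv_of_mem_cycleFactorsFinset hcmem
    have hσdc : σ = d * c := by rw [hd_def]; simp [mul_assoc]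
    have hsupp_c_le : c.support ⊆ σ.support := support_cycleOf_le σ b
    have hcb : c b = σ b := cycleOf_apply_self σ b
    have hbc : b ∈ c.support := mem_support.mpr (by rw [hcb]; exact hσb)
    have hac : a ∉ c.support := fun h => hanotin (hsupp_c_le h)
    have hca : c a = a := notMem_support.mp hac
    have hsσ : σ.support = d.support ∪ c.support := by
      conv_lhs => rw [hσdc]
      exact hdc.support_mul
    have hdcdisj : _root_.Disjoint d.support c.support :=
      disjoint_iff_disjoint_support.mp hdc
    have had : a ∉ d.support := fun h => hanotin (hsσ ▸ Finset.mem_union_left _ h)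
    have hbd : b ∉ d.support := fun h => (Finset.disjoint_left.mp hdcdisj h) hbc
    have hswapd : Equiv.Perm.Disjoint (Equiv.swap a b) d := by
      intro x
      by_cases hx : x = a
      · exact Or.inr (hx ▸ notMem_support.mp had)
      by_cases hx' : x = b
      · exact Or.inr (hx' ▸ notMem_support.mp hbd)
      · exact Or.inl (swap_apply_of_ne_of_ne hx hx')
    set c' := Equiv.swap a b * c with hc'_def
    have hc'a : c' a = b := by
      simp only [hc'_def, mul_apply, hca, swap_apply_left]
    have hcbne : c b ≠ b := by rw [hcb]; exact hσb
    have hcbnea : c b ≠ a := by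
      rw [hcb]; intro h
      exact hab (σ.injective (by rw [h, ha])).symm
    -- support of c'
    have hc'b : c' (c' a) ≠ a := by
      rw [hc'a]
      simp only [hc'_def, mul_apply]
      rw [swap_apply_of_ne_of_ne hcbnea hcbne]
      exact hcbnea
    have hswapc' : Equiv.swap a (c' a) * c' = c := by
      rw [hc'a, hc'_def, ← mul_assoc, swap_mul_self, one_mul]
    have hsuppc : c.support = c'.support \ {a} := by
      rw [← hswapc']
      exact support_swap_mul_eq c' a hc'b
    have hac' : a ∈ c'.support := mem_support.mpr (by rw [hc'a]; exact hab)
    have hsuppc' : c'.support = insert a c.support := by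
      ext x
      by_cases hx : x = a
      · subst hx; simp [hac']
      · simp [hsuppc, hx]
    -- c' is a cycle
    have hc'cyc : c'.IsCycle := by
      refine ⟨a, by rw [hc'a]; exact hab, ?_⟩
      have key : ∀ k : ℕ, ∃ i : ℕ, (c' ^ i) a = (c ^ k) b := by
        intro k
        induction k with
        | zero => exact ⟨1, by simpa using hc'a⟩
        | succ k ihk =>
          obtain ⟨i, hi⟩ := ihk
          by_cases hyb : c ((c ^ k) b) = b
          · refine ⟨1, ?_⟩
            rw [pow_one, hc'a, pow_succ', mul_apply, hyb]
          · have hmem : (c ^ (k+1)) b ∈ c.support := pow_apply_mem_support.mpr hbc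
            have hne_a : (c ^ (k+1)) b ≠ a := fun h => hac (h ▸ hmem)
            have hstep : (c ^ (k+1)) b = c ((c ^ k) b) := by rw [pow_succ', mul_apply]
            refine ⟨i + 1, ?_⟩
            rw [pow_succ', mul_apply, hi, hc'_def, mul_apply]
            rw [hstep]
            exact swap_apply_of_ne_of_ne (hstep ▸ hne_a) hyb
      intro y hy
      by_cases hya : y = a
      · subst hya; exact Equiv.Perm.SameCycle.refl _ _
      have hyc : y ∈ c.support := by
        by_contra h
        have hcy : c y = y := notMem_support.mp h
        have hyb : y ≠ b := fun h' => h (h' ▸ hbc)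
        exact hy (by rw [hc'_def, mul_apply, hcy]; exact swap_apply_of_ne_of_ne hya hyb)
      have hsc : Equiv.Perm.SameCycle c b y :=
        hcyc.sameCycle (mem_support.mp hbc) (mem_support.mp hyc)
      obtain ⟨k, -, -, hk⟩ := Equiv.Perm.SameCycle.exists_pow_eq c hsc
      obtain ⟨i, hi⟩ := key k
      exact ⟨(i : ℤ), by rw [zpow_natCast, hi, hk]⟩
    -- disjointness of d and c'
    have hdisj' : Equiv.Perm.Disjoint d c' := by
      rw [disjoint_iff_disjoint_support, hsuppc']
      rw [Finset.disjoint_insert_right]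
      exact ⟨had, hdcdisj⟩
    have hτ : Equiv.swap a b * σ = d * c' := by
      rw [hσdc, ← mul_assoc, hswapd.commute.eq, mul_assoc, ← hc'_def]
    -- cycleType card
    have hctτ : Multiset.card (Equiv.swap a b * σ).cycleType
        = Multiset.card d.cycleType + 1 := by
      rw [hτ, hdisj'.cycleType_mul, Multiset.card_add, hc'cyc.cycleType]
      simp
    have hctσ : Multiset.card σ.cycleType = Multiset.card d.cycleType + 1 := by
      conv_lhs => rw [hσdc]
      rw [hdc.cycleType_mul, Multiset.card_add, hcyc.cycleType]
      simp
    -- support card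
    have hsτ : (Equiv.swap a b * σ).support.card = d.support.card + (c.support.card + 1) := by
      rw [hτ, hdisj'.support_mul,
        Finset.card_union_of_disjoint (disjoint_iff_disjoint_support.mp hdisj'),
        hsuppc', Finset.card_insert_of_notMem hac]
    have hsσcard : σ.support.card = d.support.card + c.support.card := by
      rw [hsσ, Finset.card_union_of_disjoint hdcdisj]
    have hbound : σ.support.card + 1 ≤ Fintype.card α := by
      have := Finset.card_le_univ (insert a σ.support)
      rwa [Finset.card_insert_of_notMem hanotin] at this
    simp only [ccAux, hctτ, hctσ, hsτ, hsσcard]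
    omega







lemma cycleCount_eq_ccAux {n : ℕ} (π : Equiv.Perm (Fin n)) : cycleCount π = ccAux π := by
  rw [cycleCount, ccAux, fixed_card_eq]

/-- the embedding of `Perm (Fin n)` into `Perm (Fin (n+1))` fixing `0` -/
def succEquiv (n : ℕ) : Fin n ≃ {x : Fin (n + 1) // x ≠ 0} where
  toFun i := ⟨i.succ, i.succ_ne_zero⟩
  invFun x := (x.1).pred x.2
  left_inv i := by simp
  right_inv x := by simp

lemma decomposeFin_symm_eq {n : ℕ} (p : Fin (n + 1)) (e : Equiv.Perm (Fin n)) :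
    Equiv.Perm.decomposeFin.symm (p, e)
      = Equiv.swap 0 p * e.extendDomain (succEquiv n) := by
  ext x
  refine Fin.cases ?_ (fun i => ?_) x
  · rw [Equiv.Perm.decomposeFin_symm_apply_zero]
    have h0 : e.extendDomain (succEquiv n) 0 = 0 :=
      Equiv.Perm.extendDomain_apply_not_subtype _ _ (by simp)
    simp [h0]
  · rw [Equiv.Perm.decomposeFin_symm_apply_succ]
    have hsucc : e.extendDomain (succEquiv n) i.succ = (e i).succ := by
      have := Equiv.Perm.extendDomain_apply_subtype (e := e) (f := succEquiv n)
        (b := i.succ) (Fin.succ_ne_zero i)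
      simpa [succEquiv] using this
    simp [hsucc]

lemma ccAux_extendDomain {n : ℕ} (e : Equiv.Perm (Fin n)) :
    ccAux (e.extendDomain (succEquiv n)) = ccAux e + 1 := by
  have hsupp : (e.extendDomain (succEquiv n)).support.card = e.support.card :=
    Equiv.Perm.card_support_extend_domain _
  have hct : (e.extendDomain (succEquiv n)).cycleType = e.cycleType :=
    Equiv.Perm.cycleType_extendDomain _
  have hle : e.support.card ≤ n := by
    simpa using Finset.card_le_univ e.support
  simp only [ccAux, hsupp, hct, Fintype.card_fin]
  omega

lemma cycleCount_decomposeFin {n : ℕ} (p : Fin (n + 1)) (e : Equiv.Perm (Fin n)) :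
    cycleCount (Equiv.Perm.decomposeFin.symm (p, e))
      = if p = 0 then cycleCount e + 1 else cycleCount e := by
  rw [cycleCount_eq_ccAux, cycleCount_eq_ccAux, decomposeFin_symm_eq]
  by_cases hp : p = 0
  · subst hp
    rw [if_pos rfl]
    simp only [Equiv.swap_self]
    rw [show (Equiv.refl (Fin (n+1)) : Equiv.Perm (Fin (n+1))) = 1 from rfl, one_mul]
    exact ccAux_extendDomain e
  · rw [if_neg hp]
    have h0 : e.extendDomain (succEquiv n) 0 = 0 :=
      Equiv.Perm.extendDomain_apply_not_subtype _ _ (by simp)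
    have := ccAux_swap_mul (e.extendDomain (succEquiv n)) hp h0
    have h2 := ccAux_extendDomain e
    omega

lemma stirlingFirst_succ_zero (n : ℕ) : stirlingFirst (n + 1) 0 = 0 := by
  rw [stirlingFirst, Finset.card_eq_zero, Finset.filter_eq_empty_iff]
  intro π _
  rw [cycleCount]
  intro h
  have h1 : π.cycleType.card = 0 := by omega
  have h2 : π = 1 := Equiv.Perm.card_cycleType_eq_zero.mp h1
  subst h2
  simp at h

lemma stirlingFirst_succ_succ (n k : ℕ) :
    stirlingFirst (n + 1) (k + 1) = stirlingFirst n k + n * stirlingFirst n (k + 1) := by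
  have hcard : stirlingFirst (n + 1) (k + 1)
      = (Finset.univ.filter fun pe : Fin (n + 1) × Equiv.Perm (Fin n) =>
          cycleCount (Equiv.Perm.decomposeFin.symm pe) = k + 1).card := by
    rw [stirlingFirst]
    exact (Finset.card_equiv Equiv.Perm.decomposeFin.symm (fun pe => by simp)).symm
  rw [hcard]
  rw [Finset.card_filter]
  rw [Fintype.sum_prod_type]
  rw [Fin.sum_univ_succ]
  have h0 : (∑ e : Equiv.Perm (Fin n),
      if cycleCount (Equiv.Perm.decomposeFin.symm ((0 : Fin (n+1)), e)) = k + 1 then 1 else 0)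
      = stirlingFirst n k := by
    rw [stirlingFirst, Finset.card_filter]
    refine Finset.sum_congr rfl fun e _ => ?_
    rw [cycleCount_decomposeFin, if_pos rfl]
    simp
  have hi : ∀ i : Fin n, (∑ e : Equiv.Perm (Fin n),
      if cycleCount (Equiv.Perm.decomposeFin.symm (i.succ, e)) = k + 1 then 1 else 0)
      = stirlingFirst n (k + 1) := by
    intro i
    rw [stirlingFirst, Finset.card_filter]
    refine Finset.sum_congr rfl fun e _ => ?_
    rw [cycleCount_decomposeFin, if_neg (Fin.succ_ne_zero i)]
  rw [h0]
  rw [Finset.sum_congr rfl (fun i _ => hi i), Finset.sum_const]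
  simp [mul_comm]

lemma stirlingFirst_zero (k : ℕ) : stirlingFirst 0 k = if k = 0 then 1 else 0 := by
  have huniv : (Finset.univ : Finset (Equiv.Perm (Fin 0))) = {1} := by
    apply Finset.eq_singleton_iff_unique_mem.mpr
    exact ⟨Finset.mem_univ _, fun x _ => Subsingleton.elim x 1⟩
  have hcc : cycleCount (1 : Equiv.Perm (Fin 0)) = 0 := by
    simp [cycleCount]
  rw [stirlingFirst, huniv]
  by_cases hk : k = 0
  · subst hk; rw [Finset.filter_singleton, if_pos hcc]; simp
  · rw [Finset.filter_singleton, if_neg (by rw [hcc]; omega)]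
    simp [hk]

end Aux

lemma stirling_cross (n : ℕ) : ∀ i j : ℕ, i ≤ j →
    stirlingFirst n i * stirlingFirst n (j + 1)
      ≤ stirlingFirst n (i + 1) * stirlingFirst n j := by
  induction n with
  | zero =>
    intro i j _
    rw [stirlingFirst_zero (j + 1), if_neg (Nat.succ_ne_zero j)]
    simp
  | succ n ih =>
    intro i j hij
    cases i with
    | zero =>
      rw [stirlingFirst_succ_zero]
      simp
    | succ i' =>
      cases j with
      | zero => omega
      | succ j' =>
        have hij' : i' ≤ j' := by omega
        rw [stirlingFirst_succ_succ n i', stirlingFirst_succ_succ n (i' + 1),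
          stirlingFirst_succ_succ n j', stirlingFirst_succ_succ n (j' + 1)]
        have h1 := ih i' j' hij'
        have h2 := ih (i' + 1) (j' + 1) (by omega)
        have h3 : stirlingFirst n i' * stirlingFirst n (j' + 2)
            ≤ stirlingFirst n (i' + 2) * stirlingFirst n j' := by
          rcases eq_or_lt_of_le hij' with rfl | hlt
          · rw [mul_comm]
          · calc stirlingFirst n i' * stirlingFirst n (j' + 2)
                ≤ stirlingFirst n (i' + 1) * stirlingFirst n (j' + 1) :=
                  ih i' (j' + 1) (by omega)
              _ ≤ stirlingFirst n (i' + 2) * stirlingFirst n j' :=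
                  ih (i' + 1) j' (by omega)
        nlinarith [h1, Nat.mul_le_mul_left n h3, Nat.mul_le_mul_left (n*n) h2]

/-- For `n ≥ 1` and `1 ≤ k ≤ n - 1`, the unsigned Stirling numbers of the
first kind satisfy the normalized matching inequality
`s(n,k-1)·(s(n,k) + n·s(n,k+1)) ≤ s(n,k)·(s(n,k-1) + n·s(n,k))`; equivalently,
`s(n,k-1)/(s(n,k-1) + n·s(n,k)) ≤ s(n,k)/(s(n,k) + n·s(n,k+1))` whenever the
denominators are positive. -/
theorem stirlingFirst_normalized_matching (n k : ℕ) (hn : 1 ≤ n) (hk : 1 ≤ k)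
    (hk' : k ≤ n - 1) :
    stirlingFirst n (k - 1) * (stirlingFirst n k + n * stirlingFirst n (k + 1)) ≤
      stirlingFirst n k * (stirlingFirst n (k - 1) + n * stirlingFirst n k) ∧
    (0 < stirlingFirst n (k - 1) + n * stirlingFirst n k →
      0 < stirlingFirst n k + n * stirlingFirst n (k + 1) →
      (stirlingFirst n (k - 1) : ℚ) /
          (stirlingFirst n (k - 1) + n * stirlingFirst n k) ≤
        (stirlingFirst n k : ℚ) /
          (stirlingFirst n k + n * stirlingFirst n (k + 1))) := by
  have h := stirling_cross n (k - 1) k (by omega)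
  rw [show k - 1 + 1 = k by omega] at h
  have hmain : stirlingFirst n (k - 1) * (stirlingFirst n k + n * stirlingFirst n (k + 1)) ≤
      stirlingFirst n k * (stirlingFirst n (k - 1) + n * stirlingFirst n k) := by
    nlinarith [h]
  refine ⟨hmain, fun hA hB => ?_⟩
  have hA' : (0 : ℚ) < (stirlingFirst n (k - 1) : ℚ) + n * stirlingFirst n k := by
    exact_mod_cast hA
  have hB' : (0 : ℚ) < (stirlingFirst n k : ℚ) + n * stirlingFirst n (k + 1) := by
    exact_mod_cast hB
  rw [div_le_div_iff₀ hA' hB']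
  exact_mod_cast hmain
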